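/- arXiv:math/9512222 — 3 statements merged into one kernel-verified Lean document; each statement's English description precedes it below -/
import Mathlib

section
/- Let p be a nonzero polynomial of degree ≤ N on K and let φ ∈ L^∞(K) with ‖φ‖_{∞,K} ≤ 1 satisfying ∫_K x^α φ dx = ∫_{K∩{p>0}} x^α dx − ∫_{K∩{p<0}} x^α dx for all |α| ≤ N. Then φ = sgn(p) almost everywhere on K. -/
open MeasureTheory

lemma mvpoly_zero_set_null :
    ∀ (n : ℕ) (p : MvPolynomial (Fin n) ℝ), p ≠ 0 →
      volume {x : Fin n → ℝ | MvPolynomial.eval x p = 0} = 0 := by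
  intro n
  induction n with
  | zero =>
    intro p hp
    have : {x : Fin 0 → ℝ | MvPolynomial.eval x p = 0} = ∅ := by
      rw [Set.eq_empty_iff_forall_notMem]
      intro x hx
      apply hp
      have hxe : x = fun i => i.elim0 := funext fun i => i.elim0
      have h0 : (MvPolynomial.isEmptyAlgEquiv ℝ (Fin 0)) p = 0 := by
        rw [MvPolynomial.isEmptyAlgEquiv]
        rw [MvPolynomial.eq_C_of_isEmpty p] at hx ⊢; simp at hx; simp [hx]
      exact (map_eq_zero_iff _ (MvPolynomial.isEmptyAlgEquiv ℝ (Fin 0)).injective).mp h0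
    simp [this]
  | succ n ih =>
    intro p hp
    set q := MvPolynomial.finSuccEquiv ℝ n p with hqdef
    have hq0 : q ≠ 0 := fun h => hp ((map_eq_zero_iff _ (MvPolynomial.finSuccEquiv ℝ n).injective).mp h)
    obtain ⟨k, hk⟩ : ∃ k, q.coeff k ≠ 0 := by
      by_contra h; push_neg at h; exact hq0 (Polynomial.ext fun k => by simpa using h k)
    have hSm : MeasurableSet {x : Fin (n+1) → ℝ | MvPolynomial.eval x p = 0} :=
      (isClosed_eq (MvPolynomial.continuous_eval p) continuous_const).measurableSet
    set e := MeasurableEquiv.piFinSuccAbove (fun _ : Fin (n+1) => ℝ) 0 with hedef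
    have hmp : MeasurePreserving e.symm :=
      (volume_preserving_piFinSuccAbove (fun _ : Fin (n+1) => ℝ) 0).symm
    have key : volume {x : Fin (n+1) → ℝ | MvPolynomial.eval x p = 0}
        = volume (e.symm ⁻¹' {x | MvPolynomial.eval x p = 0}) :=
      (hmp.measure_preimage hSm.nullMeasurableSet).symm
    rw [key]
    have hesymm : ∀ (y : ℝ) (z : Fin n → ℝ), e.symm (y, z) = Fin.cons y z := by
      intro y z
      simp [hedef, MeasurableEquiv.piFinSuccAbove, Fin.insertNthEquiv, Fin.insertNth_zero]
    have hpre : e.symm ⁻¹' {x | MvPolynomial.eval x p = 0}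
        = {yz : ℝ × (Fin n → ℝ) |
            Polynomial.eval yz.1 (Polynomial.map (MvPolynomial.eval yz.2) q) = 0} := by
      ext ⟨y, z⟩
      simp only [Set.mem_preimage, Set.mem_setOf_eq, hesymm y z,
        MvPolynomial.eval_eq_eval_mv_eval', ← hqdef]
    have hTm : MeasurableSet {yz : ℝ × (Fin n → ℝ) |
        Polynomial.eval yz.1 (Polynomial.map (MvPolynomial.eval yz.2) q) = 0} := by
      rw [← hpre]; exact e.symm.measurable hSm
    rw [hpre, Measure.volume_eq_prod, Measure.prod_apply_symm hTm]
    have hae : ∀ᵐ z : Fin n → ℝ, Polynomial.map (MvPolynomial.eval z) q ≠ 0 := by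
      have h0 := ih (q.coeff k) hk
      rw [← compl_compl {z : Fin n → ℝ | MvPolynomial.eval z (q.coeff k) = 0}] at h0
      have h0' : ∀ᵐ z : Fin n → ℝ, MvPolynomial.eval z (q.coeff k) ≠ 0 := by
        rw [MeasureTheory.ae_iff]
        simpa using ih (q.coeff k) hk
      filter_upwards [h0'] with z hz hcontra
      apply hz
      have := congrArg (fun r => Polynomial.coeff r k) hcontra
      simpa [Polynomial.coeff_map] using this
    have : (fun z : Fin n → ℝ =>
        volume ((fun y : ℝ => (y, z)) ⁻¹' {yz : ℝ × (Fin n → ℝ) |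
          Polynomial.eval yz.1 (Polynomial.map (MvPolynomial.eval yz.2) q) = 0}))
        =ᵐ[volume] 0 := by
      filter_upwards [hae] with z hz
      have hfin : Set.Finite {y : ℝ | Polynomial.eval y (Polynomial.map (MvPolynomial.eval z) q) = 0} :=
        Polynomial.finite_setOf_isRoot hz
      have : ((fun y : ℝ => (y, z)) ⁻¹' {yz : ℝ × (Fin n → ℝ) |
          Polynomial.eval yz.1 (Polynomial.map (MvPolynomial.eval yz.2) q) = 0})
          = {y : ℝ | Polynomial.eval y (Polynomial.map (MvPolynomial.eval z) q) = 0} := rfl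
      simp only [Pi.zero_apply, this]
      exact hfin.measure_zero _
    rw [lintegral_congr_ae this]; simp

/-- A function `φ` with `|φ| ≤ 1` a.e. on `K` having the same moments up to degree `N`
as `sgn(p)`, for a nonzero polynomial `p` of degree at most `N`, equals `sgn(p)` a.e. on `K`. -/
theorem sign_determined_by_moments (n N : ℕ) (K : Set (Fin n → ℝ))
    (hK : IsCompact K) (hKint : (interior K).Nonempty)
    (p : MvPolynomial (Fin n) ℝ) (hp : p ≠ 0) (hdeg : p.totalDegree ≤ N)
    (φ : (Fin n → ℝ) → ℝ) (hφm : Measurable φ) (hφi : IntegrableOn φ K)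
    (hφb : ∀ᵐ x ∂(volume.restrict K), |φ x| ≤ 1)
    (hmom : ∀ α : Fin n → ℕ, (∑ i, α i) ≤ N →
      ∫ x in K, (∏ i, x i ^ α i) * φ x =
        (∫ x in K ∩ {x | 0 < MvPolynomial.eval x p}, ∏ i, x i ^ α i) -
        ∫ x in K ∩ {x | MvPolynomial.eval x p < 0}, ∏ i, x i ^ α i) :
    ∀ᵐ x ∂(volume.restrict K),
      φ x = Real.sign (MvPolynomial.eval x p) := by
  classical
  set s : (Fin n → ℝ) → ℝ := fun x => Real.sign (MvPolynomial.eval x p) with hsdef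
  have hsign_meas : Measurable fun r : ℝ => Real.sign r := by
    have h : (fun r : ℝ => Real.sign r)
        = fun r => if r < 0 then (-1:ℝ) else if 0 < r then 1 else 0 := funext fun r => rfl
    rw [h]
    exact Measurable.ite (measurableSet_lt measurable_id measurable_const) measurable_const
      (Measurable.ite (measurableSet_lt measurable_const measurable_id) measurable_const
        measurable_const)
  have hpc : Continuous fun x : Fin n → ℝ => MvPolynomial.eval x p :=
    MvPolynomial.continuous_eval p
  have hsmeas : Measurable s := hsign_meas.comp hpc.measurable
  have hsbd : ∀ x, |s x| ≤ 1 := by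
    intro x
    rcases Real.sign_apply_eq (MvPolynomial.eval x p) with h | h | h <;> simp [hsdef, h]
  have hmc : ∀ α : Fin n → ℕ, Continuous fun x : Fin n → ℝ => ∏ i, x i ^ α i :=
    fun α => continuous_finset_prod _ fun i _ => (continuous_apply i).pow _
  have hmI : ∀ α : Fin n → ℕ, IntegrableOn (fun x : Fin n → ℝ => ∏ i, x i ^ α i) K :=
    fun α => (hmc α).continuousOn.integrableOn_compact hK
  have hmsI : ∀ α : Fin n → ℕ,
      IntegrableOn (fun x : Fin n → ℝ => (∏ i, x i ^ α i) * s x) K := by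
    intro α
    have := Integrable.bdd_mul (c := 1) (hmI α) hsmeas.aestronglyMeasurable
      (Filter.Eventually.of_forall fun x => by simpa [Real.norm_eq_abs] using hsbd x)
    exact this.congr (Filter.Eventually.of_forall fun x => mul_comm _ _)
  have hφb' : ∀ᵐ x ∂(volume.restrict K), ‖φ x‖ ≤ 1 := by
    filter_upwards [hφb] with x hx using by simpa [Real.norm_eq_abs] using hx
  have hmφI : ∀ α : Fin n → ℕ,
      IntegrableOn (fun x : Fin n → ℝ => (∏ i, x i ^ α i) * φ x) K := by
    intro α
    have := Integrable.bdd_mul (c := 1) (hmI α) hφm.aestronglyMeasurable hφb'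
    exact this.congr (Filter.Eventually.of_forall fun x => mul_comm _ _)
  have hmsφI : ∀ α : Fin n → ℕ,
      IntegrableOn (fun x : Fin n → ℝ => (∏ i, x i ^ α i) * (s x - φ x)) K := by
    intro α
    have := (hmsI α).sub (hmφI α)
    exact this.congr (Filter.Eventually.of_forall fun x => (mul_sub _ _ _).symm)
  -- moments of s
  have hOp : MeasurableSet {x : Fin n → ℝ | 0 < MvPolynomial.eval x p} :=
    (isOpen_lt continuous_const hpc).measurableSet
  have hOm : MeasurableSet {x : Fin n → ℝ | MvPolynomial.eval x p < 0} :=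
    (isOpen_lt hpc continuous_const).measurableSet
  have hsm : ∀ α : Fin n → ℕ,
      ∫ x in K, (∏ i, x i ^ α i) * s x =
        (∫ x in K ∩ {x | 0 < MvPolynomial.eval x p}, ∏ i, x i ^ α i) -
        ∫ x in K ∩ {x | MvPolynomial.eval x p < 0}, ∏ i, x i ^ α i := by
    intro α
    have hfun : (fun x : Fin n → ℝ => (∏ i, x i ^ α i) * s x)
        = fun x => Set.indicator {x | 0 < MvPolynomial.eval x p}
              (fun x => ∏ i, x i ^ α i) x
            - Set.indicator {x | MvPolynomial.eval x p < 0}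
              (fun x => ∏ i, x i ^ α i) x := by
      funext x
      rcases lt_trichotomy (MvPolynomial.eval x p) 0 with h | h | h
      · simp [hsdef, Real.sign_of_neg h, Set.indicator_apply, h, asymm h]
      · simp [hsdef, h, Real.sign_zero, Set.indicator_apply]
      · simp [hsdef, Real.sign_of_pos h, Set.indicator_apply, h, asymm h]
    rw [hfun]
    rw [integral_sub ((hmI α).indicator hOp) ((hmI α).indicator hOm)]
    rw [integral_indicator hOp, integral_indicator hOm,
      Measure.restrict_restrict hOp, Measure.restrict_restrict hOm,
      Set.inter_comm _ K, Set.inter_comm _ K]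
  -- key cancellation for monomials of p
  have key : ∀ d : Fin n →₀ ℕ, d ∈ p.support →
      ∫ x in K, (∏ i, x i ^ d i) * (s x - φ x) = 0 := by
    intro d hd
    have hdN : (∑ i, d i) ≤ N := by
      refine le_trans ?_ hdeg
      have h := MvPolynomial.le_totalDegree hd
      rwa [Finsupp.sum_fintype _ _ (fun i => rfl)] at h
    have hrw : (fun x : Fin n → ℝ => (∏ i, x i ^ d i) * (s x - φ x))
        = fun x => (∏ i, x i ^ d i) * s x - (∏ i, x i ^ d i) * φ x :=
      funext fun x => mul_sub _ _ _
    rw [hrw, integral_sub (hmsI d) (hmφI d), hsm d, hmom d hdN, sub_self]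
  -- integral of p * (s - φ) over K is zero
  have hint0 : ∫ x in K, MvPolynomial.eval x p * (s x - φ x) = 0 := by
    have hrw : (fun x : Fin n → ℝ => MvPolynomial.eval x p * (s x - φ x))
        = fun x => ∑ d ∈ p.support,
            MvPolynomial.coeff d p * ((∏ i, x i ^ d i) * (s x - φ x)) := by
      funext x
      rw [MvPolynomial.eval_eq', Finset.sum_mul]
      simp [mul_assoc]
    calc ∫ x in K, MvPolynomial.eval x p * (s x - φ x)
        = ∫ x in K, ∑ d ∈ p.support,
            MvPolynomial.coeff d p * ((∏ i, x i ^ d i) * (s x - φ x)) := by rw [hrw]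
      _ = ∑ d ∈ p.support, ∫ x in K,
            MvPolynomial.coeff d p * ((∏ i, x i ^ d i) * (s x - φ x)) :=
          integral_finset_sum _ (fun d _ => (hmsφI d).const_mul _)
      _ = 0 := Finset.sum_eq_zero fun d hd => by
          rw [integral_const_mul, key d hd, mul_zero]
  -- integrability of p * (s - φ)
  have hpI : IntegrableOn (fun x => MvPolynomial.eval x p) K :=
    hpc.continuousOn.integrableOn_compact hK
  have hIfull : IntegrableOn (fun x => MvPolynomial.eval x p * (s x - φ x)) K := by
    have hb : ∀ᵐ x ∂(volume.restrict K), ‖s x - φ x‖ ≤ 2 := by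
      filter_upwards [hφb] with x hx
      have := hsbd x
      rw [Real.norm_eq_abs]
      calc |s x - φ x| ≤ |s x| + |φ x| := abs_sub _ _
        _ ≤ 1 + 1 := add_le_add this hx
        _ = 2 := by norm_num
    have := Integrable.bdd_mul (c := 2) hpI (hsmeas.sub hφm).aestronglyMeasurable hb
    exact this.congr (Filter.Eventually.of_forall fun x => mul_comm _ _)
  -- nonnegativity a.e.
  have hnonneg : 0 ≤ᵐ[volume.restrict K]
      fun x => MvPolynomial.eval x p * (s x - φ x) := by
    filter_upwards [hφb] with x hx
    obtain ⟨hl, hr⟩ := abs_le.mp hx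
    simp only [Pi.zero_apply]
    rcases lt_trichotomy (MvPolynomial.eval x p) 0 with h | h | h
    · simp only [hsdef, Real.sign_of_neg h]
      nlinarith [mul_nonneg (neg_nonneg.2 h.le) (by linarith : (0:ℝ) ≤ 1 + φ x)]
    · simp [h]
    · simp only [hsdef, Real.sign_of_pos h]
      nlinarith [mul_nonneg h.le (by linarith : (0:ℝ) ≤ 1 - φ x)]
  have hzero := (integral_eq_zero_iff_of_nonneg_ae hnonneg hIfull).mp hint0
  have hz : ∀ᵐ x ∂(volume.restrict K), MvPolynomial.eval x p ≠ 0 := by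
    refine ae_restrict_of_ae ?_
    rw [ae_iff]
    simpa using mvpoly_zero_set_null n p hp
  filter_upwards [hzero, hz] with x h1 h2
  have h1' : MvPolynomial.eval x p * (s x - φ x) = 0 := h1
  rcases mul_eq_zero.mp h1' with h | h
  · exact absurd h h2
  · have : s x = φ x := by linarith [sub_eq_zero.mp h]
    simpa [hsdef] using this.symm
end

section
/- For the open unit disk D ⊆ C, the exponential kernel satisfies E_D(z, w̄) = exp(−(1/π) ∫_D dA(ζ)/((ζ−z)(ζ̄−w̄))) = 1 − 1/(z·w̄) for all z, w with |z| > 1 and |w| > 1. -/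
open MeasureTheory Set
open scoped ENNReal NNReal


lemma disk_measurable : MeasurableSet {ζ : ℂ | ‖ζ‖ < 1} :=
  (isOpen_lt (continuous_norm) continuous_const).measurableSet

lemma moment (n m : ℕ) :
    (∫ ζ in {ζ : ℂ | ‖ζ‖ < 1}, ζ ^ n * (starRingEnd ℂ) ζ ^ m)
      = if n = m then ((Real.pi : ℂ) / (n + 1)) else 0 := by
  rw [← integral_indicator disk_measurable, ← Complex.integral_comp_polarCoord_symm]
  have key : ∀ p ∈ polarCoord.target,
      p.1 • Set.indicator {ζ : ℂ | ‖ζ‖ < 1}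
        (fun ζ => ζ ^ n * (starRingEnd ℂ) ζ ^ m) (Complex.polarCoord.symm p)
      = Set.indicator {p : ℝ × ℝ | p.1 < 1}
          (fun p => ((p.1 : ℂ) ^ (n + m + 1) *
            Complex.exp (((n : ℂ) - m) * p.2 * Complex.I))) p := by
    rintro ⟨r, θ⟩ ⟨hr, hθ⟩
    simp only [Set.indicator, mem_setOf_eq, Complex.norm_polarCoord_symm,
      abs_of_pos (Set.mem_Ioi.mp hr)]
    by_cases h : r < 1
    · simp only [h, if_true]
      have he : Complex.polarCoord.symm (r, θ) = r * Complex.exp (θ * Complex.I) := by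
        rw [Complex.polarCoord_symm_apply, Complex.exp_mul_I]
        push_cast; ring
      have hce : (starRingEnd ℂ) (Complex.exp (↑θ * Complex.I))
          = Complex.exp (-(↑θ * Complex.I)) := by
        rw [← Complex.exp_conj, map_mul, Complex.conj_I, Complex.conj_ofReal, mul_neg]
      rw [he, Complex.real_smul, map_mul, Complex.conj_ofReal, hce, mul_pow, mul_pow,
        ← Complex.exp_nat_mul, ← Complex.exp_nat_mul]
      rw [(by push_cast; ring : ((n : ℂ) - m) * θ * Complex.I
            = (n : ℂ) * (↑θ * Complex.I) + (m : ℂ) * -(↑θ * Complex.I)), Complex.exp_add]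
      push_cast; ring
    · simp [h]
  rw [setIntegral_congr_fun polarCoord.open_target.measurableSet key,
    setIntegral_indicator (measurableSet_lt measurable_fst measurable_const)]
  have hset : polarCoord.target ∩ {p : ℝ × ℝ | p.1 < 1}
      = Ioo (0:ℝ) 1 ×ˢ Ioo (-Real.pi) Real.pi := by
    rw [polarCoord_target]
    ext ⟨r, θ⟩
    simp only [mem_inter_iff, mem_prod, mem_Ioi, mem_Ioo, mem_setOf_eq]
    tauto
  rw [hset, Measure.volume_eq_prod, setIntegral_prod_mul
    (fun r : ℝ => ((r : ℂ) ^ (n + m + 1)))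
    (fun θ : ℝ => Complex.exp (((n : ℂ) - m) * θ * Complex.I))]
  have hrad : (∫ r in Ioo (0:ℝ) 1, ((r : ℂ) ^ (n + m + 1)))
      = ((1 / (n + m + 2) : ℝ) : ℂ) := by
    rw [← integral_Ioc_eq_integral_Ioo, ← intervalIntegral.integral_of_le (by norm_num : (0:ℝ) ≤ 1)]
    have : ∀ r : ℝ, ((r : ℂ) ^ (n + m + 1)) = ((r ^ (n + m + 1) : ℝ) : ℂ) := by push_cast; simp
    simp_rw [this]
    rw [intervalIntegral.integral_ofReal, integral_pow]
    norm_num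
    push_cast; ring
  rw [hrad]
  rcases eq_or_ne n m with h | h
  · subst h
    simp only [sub_self, zero_mul, Complex.exp_zero, if_pos rfl, if_true]
    rw [setIntegral_const, Real.volume_real_Ioo_of_le (by linarith [Real.pi_pos] : -Real.pi ≤ Real.pi),
      Complex.real_smul, mul_one]
    have h1 : ((n:ℝ) + n + 2) ≠ 0 := by positivity
    have h2 : ((n:ℂ) + 1) ≠ 0 := by intro hc; exact_mod_cast hc
    have h3 : ((n:ℂ) + n + 2) ≠ 0 := by
      intro hc
      have := congrArg Complex.re hc
      simp [Complex.add_re, Complex.natCast_re] at this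
      linarith [Nat.cast_nonneg (α := ℝ) n]
    have h4 : (2 + (n:ℂ) * 2) ≠ 0 := by intro hc; apply h3; linear_combination hc
    push_cast
    field_simp
    ring_nf
    field_simp
    rw [add_comm (1:ℂ), div_self h2]
  · rw [if_neg h]
    have hc : ((n : ℂ) - m) * Complex.I ≠ 0 := by
      apply mul_ne_zero _ Complex.I_ne_zero
      rw [sub_ne_zero]
      exact_mod_cast fun hc => h (Nat.cast_injective hc)
    have : ∀ θ : ℝ, ((n : ℂ) - m) * θ * Complex.I = (((n : ℂ) - m) * Complex.I) * θ := by
      intro θ; ring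
    simp_rw [this]
    rw [← integral_Ioc_eq_integral_Ioo,
      ← intervalIntegral.integral_of_le (by linarith [Real.pi_pos] : -Real.pi ≤ Real.pi),
      integral_exp_mul_complex hc]
    have hper : Complex.exp ((((n : ℂ) - m) * Complex.I) * Real.pi)
        = Complex.exp ((((n : ℂ) - m) * Complex.I) * (-Real.pi)) := by
      have h2 := Complex.exp_int_mul_two_pi_mul_I ((n : ℤ) - m)
      push_cast at h2
      calc Complex.exp ((((n : ℂ) - m) * Complex.I) * Real.pi)
          = Complex.exp ((((n : ℂ) - m) * Complex.I) * (-Real.pi)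
              + ((n : ℂ) - m) * (2 * (Real.pi : ℂ) * Complex.I)) := by
            congr 1; push_cast; ring
        _ = _ := by rw [Complex.exp_add, h2, mul_one]
    rw [Complex.ofReal_neg, hper, sub_self, zero_div, mul_zero]

/-- For the open unit disk `D`, the exponential kernel equals `1 - 1/(z·w̄)` for
`|z| > 1`, `|w| > 1`. -/
theorem expKernel_unitDisk (z w : ℂ) (hz : 1 < ‖z‖) (hw : 1 < ‖w‖) :
    Complex.exp (-(1 / (Real.pi : ℂ)) *
        ∫ ζ in {ζ : ℂ | ‖ζ‖ < 1},
          1 / ((ζ - z) * ((starRingEnd ℂ) ζ - (starRingEnd ℂ) w))) =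
      1 - 1 / (z * (starRingEnd ℂ) w) := by
  have hz' : 1 < ‖z‖ := hz
  have hw' : 1 < ‖w‖ := hw
  have hz0 : z ≠ 0 := by intro h; rw [h] at hz'; simp at hz'; linarith
  have hw0 : w ≠ 0 := by intro h; rw [h] at hw'; simp at hw'; linarith
  have hcw' : 1 < ‖(starRingEnd ℂ) w‖ := by rwa [RCLike.norm_conj]
  have hcw0 : (starRingEnd ℂ) w ≠ 0 := by
    simpa using (map_ne_zero (starRingEnd ℂ)).mpr hw0
  set u : ℂ := (z * (starRingEnd ℂ) w)⁻¹ with hu_def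
  have hu : ‖u‖ < 1 := by
    rw [hu_def, norm_inv, norm_mul]
    have h1 : 1 < ‖z‖ * ‖(starRingEnd ℂ) w‖ := one_lt_mul hz'.le hcw'
    rw [inv_lt_one_iff₀]; right; exact h1
  set F : ℕ × ℕ → ℂ → ℂ := fun p ζ =>
    (ζ ^ p.1 / z ^ (p.1 + 1)) * ((starRingEnd ℂ) ζ ^ p.2 / ((starRingEnd ℂ) w) ^ (p.2 + 1))
    with hF_def
  -- pointwise expansion
  have hpt : ∀ ζ ∈ {ζ : ℂ | ‖ζ‖ < 1},
      1 / ((ζ - z) * ((starRingEnd ℂ) ζ - (starRingEnd ℂ) w)) = ∑' p : ℕ × ℕ, F p ζ := by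
    intro ζ hζ
    have hζ1 : ‖ζ‖ < 1 := hζ
    have hζz : ‖ζ / z‖ < 1 := by
      rw [norm_div]
      calc ‖ζ‖ / ‖z‖ < 1 / 1 := by
            apply div_lt_div₀ hζ1 hz'.le (by norm_num) (by linarith)
        _ = 1 := by norm_num
    have hζw : ‖(starRingEnd ℂ) ζ / (starRingEnd ℂ) w‖ < 1 := by
      rw [norm_div, RCLike.norm_conj, RCLike.norm_conj]
      calc ‖ζ‖ / ‖w‖ < 1 / 1 := by
            apply div_lt_div₀ hζ1 hw'.le (by norm_num) (by linarith)
        _ = 1 := by norm_num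
    have hzζ : z - ζ ≠ 0 := by
      intro h
      have : z = ζ := by linear_combination h
      rw [this] at hz'; linarith
    have hwζ : (starRingEnd ℂ) w - (starRingEnd ℂ) ζ ≠ 0 := by
      intro h
      have : (starRingEnd ℂ) w = (starRingEnd ℂ) ζ := by linear_combination h
      rw [this, RCLike.norm_conj] at hcw'; linarith
    have ha : HasSum (fun n : ℕ => ζ ^ n / z ^ (n + 1)) ((z - ζ)⁻¹) := by
      have h := (hasSum_geometric_of_norm_lt_one hζz).div_const z
      have e1 : (fun n : ℕ => (ζ / z) ^ n / z) = fun n : ℕ => ζ ^ n / z ^ (n + 1) := by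
        funext n; rw [div_pow, div_div, ← pow_succ]
      have e2 : (1 - ζ / z)⁻¹ / z = (z - ζ)⁻¹ := by
        rw [eq_comm, inv_eq_iff_eq_inv, eq_comm]
        field_simp
      rwa [e1, e2] at h
    have hb : HasSum (fun m : ℕ => (starRingEnd ℂ) ζ ^ m / ((starRingEnd ℂ) w) ^ (m + 1))
        (((starRingEnd ℂ) w - (starRingEnd ℂ) ζ)⁻¹) := by
      have h := (hasSum_geometric_of_norm_lt_one hζw).div_const ((starRingEnd ℂ) w)
      have e1 : (fun m : ℕ => ((starRingEnd ℂ) ζ / (starRingEnd ℂ) w) ^ m / (starRingEnd ℂ) w)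
          = fun m : ℕ => (starRingEnd ℂ) ζ ^ m / ((starRingEnd ℂ) w) ^ (m + 1) := by
        funext m; rw [div_pow, div_div, ← pow_succ]
      have e2 : (1 - (starRingEnd ℂ) ζ / (starRingEnd ℂ) w)⁻¹ / (starRingEnd ℂ) w
          = ((starRingEnd ℂ) w - (starRingEnd ℂ) ζ)⁻¹ := by
        rw [eq_comm, inv_eq_iff_eq_inv, eq_comm]
        field_simp
      rwa [e1, e2] at h
    have hna : Summable fun n : ℕ => ‖ζ ^ n / z ^ (n + 1)‖ := by
      refine ((summable_geometric_of_lt_one (by positivity) hζz).mul_right ‖z‖⁻¹).congr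
        fun n => ?_
      simp only [norm_div, norm_pow, norm_mul, div_pow, pow_succ]
      field_simp
      try ring
    have hnb : Summable fun m : ℕ => ‖(starRingEnd ℂ) ζ ^ m / ((starRingEnd ℂ) w) ^ (m + 1)‖ := by
      refine ((summable_geometric_of_lt_one (by positivity) hζw).mul_right
        ‖(starRingEnd ℂ) w‖⁻¹).congr fun m => ?_
      simp only [norm_div, norm_pow, norm_mul, div_pow, pow_succ]
      field_simp
      try ring
    calc 1 / ((ζ - z) * ((starRingEnd ℂ) ζ - (starRingEnd ℂ) w))
        = (z - ζ)⁻¹ * ((starRingEnd ℂ) w - (starRingEnd ℂ) ζ)⁻¹ := by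
          rw [← mul_inv, one_div]; congr 1; ring
      _ = (∑' n : ℕ, ζ ^ n / z ^ (n + 1)) *
            ∑' m : ℕ, (starRingEnd ℂ) ζ ^ m / ((starRingEnd ℂ) w) ^ (m + 1) := by
          rw [ha.tsum_eq, hb.tsum_eq]
      _ = ∑' p : ℕ × ℕ, F p ζ := tsum_mul_tsum_of_summable_norm hna hnb
  have hD := disk_measurable
  -- measurability
  have hFm : ∀ p : ℕ × ℕ, AEStronglyMeasurable (F p)
      (volume.restrict {ζ : ℂ | ‖ζ‖ < 1}) := by
    intro p
    apply Continuous.aestronglyMeasurable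
    rw [hF_def]
    have hc : Continuous fun ζ : ℂ => (starRingEnd ℂ) ζ := continuous_star
    exact ((continuous_pow p.1).div_const _).mul ((hc.pow p.2).div_const _)
  -- the L¹ bound
  have hball : {ζ : ℂ | ‖ζ‖ < 1} = Metric.ball (0 : ℂ) 1 := by
    ext ζ; simp [Metric.mem_ball, Complex.dist_eq]
  have hvol : volume {ζ : ℂ | ‖ζ‖ < 1} < ⊤ := by
    rw [hball]; exact measure_ball_lt_top
  set a : ℝ≥0∞ := (‖z‖₊ : ℝ≥0∞)⁻¹ with ha_def
  set b : ℝ≥0∞ := (‖(starRingEnd ℂ) w‖₊ : ℝ≥0∞)⁻¹ with hb_def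
  have ha1 : a < 1 := by
    rw [ha_def, ENNReal.inv_lt_one]
    exact_mod_cast hz'
  have hb1 : b < 1 := by
    rw [hb_def, ENNReal.inv_lt_one]
    exact_mod_cast hcw'
  have hzn0 : ‖z‖₊ ≠ 0 := by simp [hz0]
  have hwn0 : ‖(starRingEnd ℂ) w‖₊ ≠ 0 := nnnorm_ne_zero_iff.mpr hcw0
  have hptbd : ∀ p : ℕ × ℕ, ∀ ζ ∈ {ζ : ℂ | ‖ζ‖ < 1},
      (‖F p ζ‖₊ : ℝ≥0∞) ≤ a ^ (p.1 + 1) * b ^ (p.2 + 1) := by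
    rintro ⟨n, m⟩ ζ hζ
    have hζ1 : ‖ζ‖ ≤ 1 := le_of_lt hζ
    have hreal : ‖F (n, m) ζ‖ ≤ (‖z‖ ^ (n + 1))⁻¹ * (‖(starRingEnd ℂ) w‖ ^ (m + 1))⁻¹ := by
      rw [hF_def]
      simp only [norm_mul, norm_div, norm_pow, RCLike.norm_conj]
      rw [div_mul_div_comm, ← mul_inv]
      apply div_le_of_le_mul₀ (by positivity) (by positivity)
      rw [inv_mul_cancel₀ (by positivity)]
      calc ‖ζ‖ ^ n * ‖ζ‖ ^ m ≤ 1 * 1 := by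
            apply mul_le_mul (pow_le_one₀ (norm_nonneg _) hζ1)
              (pow_le_one₀ (norm_nonneg _) hζ1) (by positivity) (by norm_num)
        _ = 1 := by norm_num
    rw [ha_def, hb_def, ← ENNReal.coe_inv hzn0, ← ENNReal.coe_inv hwn0,
      ← ENNReal.coe_pow, ← ENNReal.coe_pow, ← ENNReal.coe_mul, ENNReal.coe_le_coe,
      ← NNReal.coe_le_coe]
    push_cast
    simpa [inv_pow] using hreal
  have hlint : ∀ p : ℕ × ℕ, (∫⁻ ζ in {ζ : ℂ | ‖ζ‖ < 1}, ‖F p ζ‖₊)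
      ≤ a ^ (p.1 + 1) * b ^ (p.2 + 1) * volume {ζ : ℂ | ‖ζ‖ < 1} := by
    intro p
    calc (∫⁻ ζ in {ζ : ℂ | ‖ζ‖ < 1}, ‖F p ζ‖₊)
        ≤ ∫⁻ _ in {ζ : ℂ | ‖ζ‖ < 1}, a ^ (p.1 + 1) * b ^ (p.2 + 1) := by
          apply lintegral_mono_ae
          rw [ae_restrict_iff' hD]
          exact .of_forall (hptbd p)
      _ = a ^ (p.1 + 1) * b ^ (p.2 + 1) * volume {ζ : ℂ | ‖ζ‖ < 1} :=
          setLIntegral_const _ _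
  have hgeo : ∀ c : ℝ≥0∞, c < 1 → (∑' n : ℕ, c ^ (n + 1)) < ⊤ := by
    intro c hc
    calc (∑' n : ℕ, c ^ (n + 1)) ≤ ∑' n : ℕ, c ^ n := by
          apply ENNReal.tsum_le_tsum
          intro n
          rw [pow_succ]
          calc c ^ n * c ≤ c ^ n * 1 := mul_le_mul_right hc.le _
            _ = c ^ n := mul_one _
      _ = (1 - c)⁻¹ := ENNReal.tsum_geometric c
      _ < ⊤ := ENNReal.inv_lt_top.mpr (tsub_pos_iff_lt.mpr hc)
  have hbound : (∑' p : ℕ × ℕ, ∫⁻ ζ in {ζ : ℂ | ‖ζ‖ < 1}, ‖F p ζ‖₊) ≠ ⊤ := by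
    apply LT.lt.ne
    calc (∑' p : ℕ × ℕ, ∫⁻ ζ in {ζ : ℂ | ‖ζ‖ < 1}, ‖F p ζ‖₊)
        ≤ ∑' p : ℕ × ℕ, a ^ (p.1 + 1) * b ^ (p.2 + 1) * volume {ζ : ℂ | ‖ζ‖ < 1} :=
          ENNReal.tsum_le_tsum hlint
      _ = (∑' p : ℕ × ℕ, a ^ (p.1 + 1) * b ^ (p.2 + 1))
            * volume {ζ : ℂ | ‖ζ‖ < 1} := ENNReal.tsum_mul_right
      _ = ((∑' n : ℕ, a ^ (n + 1)) * ∑' m : ℕ, b ^ (m + 1))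
            * volume {ζ : ℂ | ‖ζ‖ < 1} := by
          congr 1
          rw [ENNReal.tsum_prod']
          simp_rw [ENNReal.tsum_mul_left, ENNReal.tsum_mul_right]
      _ < ⊤ := by
          apply ENNReal.mul_lt_top _ hvol
          exact ENNReal.mul_lt_top (hgeo a ha1) (hgeo b hb1)
  -- swap integral and sum
  have hswap : (∫ ζ in {ζ : ℂ | ‖ζ‖ < 1},
        1 / ((ζ - z) * ((starRingEnd ℂ) ζ - (starRingEnd ℂ) w)))
      = ∑' p : ℕ × ℕ, ∫ ζ in {ζ : ℂ | ‖ζ‖ < 1}, F p ζ := by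
    rw [setIntegral_congr_fun hD hpt]
    exact integral_tsum hFm hbound
  -- evaluate each integral
  have hterm : ∀ p : ℕ × ℕ, (∫ ζ in {ζ : ℂ | ‖ζ‖ < 1}, F p ζ)
      = (if p.1 = p.2 then ((Real.pi : ℂ) / (p.1 + 1)) else 0)
          / (z ^ (p.1 + 1) * ((starRingEnd ℂ) w) ^ (p.2 + 1)) := by
    rintro ⟨n, m⟩
    rw [hF_def]
    simp only [div_mul_div_comm]
    rw [integral_div, moment]
  -- collapse to the diagonal
  have hdiag : (∑' p : ℕ × ℕ, (if p.1 = p.2 then ((Real.pi : ℂ) / (p.1 + 1)) else 0)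
        / (z ^ (p.1 + 1) * ((starRingEnd ℂ) w) ^ (p.2 + 1)))
      = ∑' n : ℕ, ((Real.pi : ℂ) / (n + 1)) / (z ^ (n + 1) * ((starRingEnd ℂ) w) ^ (n + 1)) := by
    rw [← Function.Injective.tsum_eq (g := fun n : ℕ => ((n, n) : ℕ × ℕ))
      (fun n₁ n₂ h => (Prod.mk.injEq _ _ _ _ ▸ h : _ ∧ _).1) ?_]
    · simp
    · intro p hp
      rcases eq_or_ne p.1 p.2 with h | h
      · exact ⟨p.1, by rw [Prod.ext_iff]; exact ⟨rfl, h⟩⟩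
      · exfalso; apply hp; simp [h]
  -- sum the series
  have h1u : (1 : ℂ) - u ≠ 0 := by
    intro h
    have : u = 1 := by linear_combination -h
    rw [this] at hu; simp at hu
  have hlog : HasSum (fun n : ℕ => u ^ (n + 1) / ((n : ℂ) + 1)) (-Complex.log (1 - u)) := by
    have h := Complex.hasSum_taylorSeries_neg_log hu
    have h2 := (hasSum_nat_add_iff (f := fun n : ℕ => u ^ n / (n : ℂ)) 1).mpr (by simpa using h)
    refine h2.congr_fun fun n => ?_
    push_cast
    ring
  have hval : (∑' n : ℕ, ((Real.pi : ℂ) / (n + 1)) / (z ^ (n + 1) * ((starRingEnd ℂ) w) ^ (n + 1)))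
      = (Real.pi : ℂ) * (-Complex.log (1 - u)) := by
    rw [← (hlog.mul_left (Real.pi : ℂ)).tsum_eq]
    apply tsum_congr
    intro n
    have hup : u ^ (n + 1) = (z ^ (n + 1) * ((starRingEnd ℂ) w) ^ (n + 1))⁻¹ := by
      rw [hu_def, ← mul_pow, ← inv_pow]
    rw [hup, div_div, div_eq_mul_inv, div_eq_mul_inv, mul_inv]
    ring
  -- finish
  rw [hswap, tsum_congr hterm, hdiag, hval]
  have hπ : ((Real.pi : ℂ)) ≠ 0 := by exact_mod_cast Real.pi_ne_zero
  have : -(1 / (Real.pi : ℂ)) * ((Real.pi : ℂ) * (-Complex.log (1 - u))) = Complex.log (1 - u) := by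
    field_simp
  rw [this, Complex.exp_log h1u, hu_def, inv_eq_one_div]
end

section
/- Let T be a bounded operator with [T*,T] = ξ⊗ξ and set E(z,w̄) = 1 − ⟨(T*−w̄)^{-1}ξ, (T*−z̄)^{-1}ξ⟩ for z, w in the resolvent set. Then ⟨(T−z₁)^{-1}(T*−z̄₂)^{-1}ξ, (T−w₂)^{-1}(T*−w̄₁)^{-1}ξ⟩ = (E(z₁,w̄₂)E(w₁,z̄₂) − E(z₁,z̄₂)E(w₁,w̄₂)) / ((w₁−z₁)(w̄₂−z̄₂)E(z₁,w̄₂)), whenever w₁ ≠ z₁, w₂ ≠ z₂, E(z₁,w̄₂) ≠ 0, and all the resolvents exist. -/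
open ContinuousLinearMap

section Aux
variable {H : Type*} [NormedAddCommGroup H] [InnerProductSpace ℂ H] [CompleteSpace H]

lemma aux_star_res (T : H →L[ℂ] H) (l : ℂ) :
    star (T - l • (1 : H →L[ℂ] H)) = adjoint T - (starRingEnd ℂ l) • (1 : H →L[ℂ] H) := by
  simp [star_sub, star_smul, star_eq_adjoint]

lemma aux_inv_adj (T : H →L[ℂ] H) (l : ℂ) :
    Ring.inverse (adjoint T - (starRingEnd ℂ l) • (1 : H →L[ℂ] H)) =
      adjoint (Ring.inverse (T - l • (1 : H →L[ℂ] H))) := by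
  rw [← aux_star_res, Ring.inverse_star, star_eq_adjoint]

lemma aux_adj_inv (T : H →L[ℂ] H) (l : ℂ) :
    Ring.inverse (T - l • (1 : H →L[ℂ] H)) =
      adjoint (Ring.inverse (adjoint T - (starRingEnd ℂ l) • (1 : H →L[ℂ] H))) := by
  rw [aux_inv_adj, adjoint_adjoint]

lemma aux_isUnit (T : H →L[ℂ] H) (l : ℂ)
    (h : IsUnit (adjoint T - (starRingEnd ℂ l) • (1 : H →L[ℂ] H))) :
    IsUnit (T - l • (1 : H →L[ℂ] H)) := by
  have := h.star
  rwa [← aux_star_res, star_star] at this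

lemma aux_innerA (T : H →L[ℂ] H) (l : ℂ) (x y : H) :
    (inner ℂ (Ring.inverse (adjoint T - (starRingEnd ℂ l) • (1 : H →L[ℂ] H)) x) y : ℂ)
      = inner ℂ x (Ring.inverse (T - l • (1 : H →L[ℂ] H)) y) := by
  rw [aux_inv_adj]
  exact adjoint_inner_left _ _ _

lemma aux_innerB (T : H →L[ℂ] H) (l : ℂ) (x y : H) :
    (inner ℂ (Ring.inverse (T - l • (1 : H →L[ℂ] H)) x) y : ℂ)
      = inner ℂ x (Ring.inverse (adjoint T - (starRingEnd ℂ l) • (1 : H →L[ℂ] H)) y) := by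
  rw [aux_adj_inv]
  exact adjoint_inner_left _ _ _

lemma aux_res (S : H →L[ℂ] H) (a b : ℂ) (ha : IsUnit (S - a • (1 : H →L[ℂ] H)))
    (hb : IsUnit (S - b • (1 : H →L[ℂ] H))) :
    Ring.inverse (S - b • (1 : H →L[ℂ] H)) - Ring.inverse (S - a • (1 : H →L[ℂ] H)) =
      (b - a) • (Ring.inverse (S - b • (1 : H →L[ℂ] H)) *
        Ring.inverse (S - a • (1 : H →L[ℂ] H))) := by
  have h1 : (S - a • (1 : H →L[ℂ] H)) - (S - b • (1 : H →L[ℂ] H))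
      = (b - a) • (1 : H →L[ℂ] H) := by
    rw [sub_smul]; abel
  calc Ring.inverse (S - b • (1 : H →L[ℂ] H)) - Ring.inverse (S - a • (1 : H →L[ℂ] H))
      = Ring.inverse (S - b • (1 : H →L[ℂ] H)) * ((S - a • (1 : H →L[ℂ] H)) *
          Ring.inverse (S - a • (1 : H →L[ℂ] H)))
        - Ring.inverse (S - b • (1 : H →L[ℂ] H)) * (S - b • (1 : H →L[ℂ] H)) *
          Ring.inverse (S - a • (1 : H →L[ℂ] H)) := by
        rw [Ring.mul_inverse_cancel _ ha, mul_one, Ring.inverse_mul_cancel _ hb, one_mul]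
    _ = Ring.inverse (S - b • (1 : H →L[ℂ] H)) *
          ((S - a • (1 : H →L[ℂ] H)) - (S - b • (1 : H →L[ℂ] H))) *
          Ring.inverse (S - a • (1 : H →L[ℂ] H)) := by
        simp only [mul_sub, sub_mul, mul_assoc]
    _ = (b - a) • (Ring.inverse (S - b • (1 : H →L[ℂ] H)) *
          Ring.inverse (S - a • (1 : H →L[ℂ] H))) := by
        rw [h1, mul_smul_comm, mul_one, smul_mul_assoc]

lemma aux_comm (T : H →L[ℂ] H) (ξ : H)
    (hcomm : adjoint T * T - T * adjoint T = (innerSL ℂ ξ).smulRight ξ) (z w : ℂ) :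
    (adjoint T - (starRingEnd ℂ w) • (1 : H →L[ℂ] H)) * (T - z • (1 : H →L[ℂ] H))
      - (T - z • (1 : H →L[ℂ] H)) * (adjoint T - (starRingEnd ℂ w) • (1 : H →L[ℂ] H))
      = (innerSL ℂ ξ).smulRight ξ := by
  rw [← hcomm]
  simp only [mul_sub, sub_mul, mul_one, one_mul, smul_mul_assoc, mul_smul_comm, smul_smul]
  module

end Aux

/-- Determinantal-function identity: for `[T*,T] = ξ⊗ξ` and
`E(z,w̄) = 1 − ⟨(T*−w̄)⁻¹ξ, (T*−z̄)⁻¹ξ⟩`,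
`⟨(T−z₁)⁻¹(T*−z̄₂)⁻¹ξ, (T−w₂)⁻¹(T*−w̄₁)⁻¹ξ⟩ =
 (E(z₁,w̄₂)E(w₁,z̄₂) − E(z₁,z̄₂)E(w₁,w̄₂)) / ((w₁−z₁)(w̄₂−z̄₂)E(z₁,w̄₂))`.
(Here `⟨x, y⟩` denotes the inner product linear in `x`, i.e. `inner y x` in Mathlib.) -/
theorem determinantal_identity {H : Type*} [NormedAddCommGroup H]
    [InnerProductSpace ℂ H] [CompleteSpace H] (T : H →L[ℂ] H) (ξ : H)
    (hcomm : adjoint T * T - T * adjoint T = (innerSL ℂ ξ).smulRight ξ)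
    (E : ℂ → ℂ → ℂ)
    (hE : ∀ z w : ℂ, E z w = 1 -
      (inner ℂ (Ring.inverse (adjoint T - (starRingEnd ℂ z) • (1 : H →L[ℂ] H)) ξ)
             (Ring.inverse (adjoint T - (starRingEnd ℂ w) • (1 : H →L[ℂ] H)) ξ) : ℂ))
    (z₁ z₂ w₁ w₂ : ℂ)
    (hz₁ : IsUnit (T - z₁ • (1 : H →L[ℂ] H)))
    (hw₂ : IsUnit (T - w₂ • (1 : H →L[ℂ] H)))
    (hz₁' : IsUnit (adjoint T - (starRingEnd ℂ z₁) • (1 : H →L[ℂ] H)))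
    (hz₂' : IsUnit (adjoint T - (starRingEnd ℂ z₂) • (1 : H →L[ℂ] H)))
    (hw₁' : IsUnit (adjoint T - (starRingEnd ℂ w₁) • (1 : H →L[ℂ] H)))
    (hw₂' : IsUnit (adjoint T - (starRingEnd ℂ w₂) • (1 : H →L[ℂ] H)))
    (hne₁ : w₁ ≠ z₁) (hne₂ : w₂ ≠ z₂) (hEne : E z₁ w₂ ≠ 0) :
    (inner ℂ ((Ring.inverse (T - w₂ • (1 : H →L[ℂ] H)) *
              Ring.inverse (adjoint T - (starRingEnd ℂ w₁) • (1 : H →L[ℂ] H))) ξ)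
           ((Ring.inverse (T - z₁ • (1 : H →L[ℂ] H)) *
              Ring.inverse (adjoint T - (starRingEnd ℂ z₂) • (1 : H →L[ℂ] H))) ξ) : ℂ) =
      (E z₁ w₂ * E w₁ z₂ - E z₁ z₂ * E w₁ w₂) /
        ((w₁ - z₁) * ((starRingEnd ℂ) w₂ - (starRingEnd ℂ) z₂) * E z₁ w₂) := by
  have hAw1 : IsUnit (T - w₁ • (1 : H →L[ℂ] H)) := aux_isUnit T w₁ hw₁'
  -- abbreviations
  set Ra : H →L[ℂ] H := Ring.inverse (T - z₁ • (1 : H →L[ℂ] H)) with hRa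
  set Raw : H →L[ℂ] H := Ring.inverse (T - w₁ • (1 : H →L[ℂ] H)) with hRaw
  set Rw1 : H →L[ℂ] H :=
    Ring.inverse (adjoint T - (starRingEnd ℂ w₁) • (1 : H →L[ℂ] H)) with hRw1
  set Rw2 : H →L[ℂ] H :=
    Ring.inverse (adjoint T - (starRingEnd ℂ w₂) • (1 : H →L[ℂ] H)) with hRw2
  set Rz2 : H →L[ℂ] H :=
    Ring.inverse (adjoint T - (starRingEnd ℂ z₂) • (1 : H →L[ℂ] H)) with hRz2
  have hane : w₁ - z₁ ≠ 0 := sub_ne_zero.mpr hne₁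
  have hbne : (starRingEnd ℂ) w₂ - (starRingEnd ℂ) z₂ ≠ 0 := by
    refine sub_ne_zero.mpr fun h => hne₂ ?_
    simpa using congrArg (starRingEnd ℂ) h
  -- scalar values of inner products of the u-vectors
  have he : ∀ x y : ℂ,
      (inner ℂ (Ring.inverse (adjoint T - (starRingEnd ℂ x) • (1 : H →L[ℂ] H)) ξ)
        (Ring.inverse (adjoint T - (starRingEnd ℂ y) • (1 : H →L[ℂ] H)) ξ) : ℂ)
        = 1 - E x y := fun x y => by rw [hE x y]; ring
  -- β-values
  have hβ : ∀ t : ℂ,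
      (inner ℂ ξ (Ra (Ring.inverse (adjoint T - (starRingEnd ℂ t) • (1 : H →L[ℂ] H)) ξ)) : ℂ)
        = 1 - E z₁ t := fun t => by
    rw [hRa, ← aux_innerA T z₁ ξ]
    exact he z₁ t
  have hβw : ∀ t : ℂ,
      (inner ℂ ξ (Raw (Ring.inverse (adjoint T - (starRingEnd ℂ t) • (1 : H →L[ℂ] H)) ξ)) : ℂ)
        = 1 - E w₁ t := fun t => by
    rw [hRaw, ← aux_innerA T w₁ ξ]
    exact he w₁ t
  -- the goal's left-hand side
  have hgoalL : (inner ℂ ((Ring.inverse (T - w₂ • (1 : H →L[ℂ] H)) * Rw1) ξ)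
      ((Ra * Rz2) ξ) : ℂ) = inner ℂ (Rw1 ξ) (Rw2 (Ra (Rz2 ξ))) := by
    rw [ContinuousLinearMap.mul_apply, ContinuousLinearMap.mul_apply, aux_innerB T w₂, hRw2]
  rw [hgoalL]
  -- commutator identity for inverses
  have hKc := aux_comm T ξ hcomm z₁ w₂
  have h1 : Ra * Rw2 * ((adjoint T - (starRingEnd ℂ w₂) • (1 : H →L[ℂ] H)) *
      (T - z₁ • (1 : H →L[ℂ] H))) * (Rw2 * Ra) = Rw2 * Ra := by
    simp only [mul_assoc, hRw2, hRa]
    rw [Ring.inverse_mul_cancel_left _ _ hw₂', Ring.inverse_mul_cancel_left _ _ hz₁]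
  have h2 : Ra * Rw2 * ((T - z₁ • (1 : H →L[ℂ] H)) *
      (adjoint T - (starRingEnd ℂ w₂) • (1 : H →L[ℂ] H))) * (Rw2 * Ra) = Ra * Rw2 := by
    simp only [mul_assoc, hRw2, hRa]
    rw [Ring.mul_inverse_cancel_left _ _ hw₂']
    rw [Ring.mul_inverse_cancel _ hz₁, mul_one]
  have hop : Rw2 * Ra = Ra * Rw2 +
      Ra * Rw2 * ((innerSL ℂ ξ).smulRight ξ) * (Rw2 * Ra) := by
    have : Rw2 * Ra - Ra * Rw2 =
        Ra * Rw2 * ((innerSL ℂ ξ).smulRight ξ) * (Rw2 * Ra) := by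
      rw [← hKc, mul_sub, sub_mul, h1, h2]
    linear_combination (norm := abel) this
  -- vector identity
  set α : ℂ := (inner ℂ ξ (Rw2 (Ra (Rz2 ξ))) : ℂ) with hα
  have hv : Rw2 (Ra (Rz2 ξ)) = Ra (Rw2 (Rz2 ξ)) + α • Ra (Rw2 ξ) := by
    have := congrArg (fun S : H →L[ℂ] H => S (Rz2 ξ)) hop
    simpa only [ContinuousLinearMap.mul_apply, ContinuousLinearMap.add_apply, smulRight_apply, innerSL_apply_apply, map_smul, ← hα]
      using this
  -- resolvent identities applied to ξ
  have hrB : Rw2 ξ - Rz2 ξ =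
      ((starRingEnd ℂ) w₂ - (starRingEnd ℂ) z₂) • Rw2 (Rz2 ξ) := by
    have := congrArg (fun S : H →L[ℂ] H => S ξ)
      (aux_res (adjoint T) ((starRingEnd ℂ) z₂) ((starRingEnd ℂ) w₂) hz₂' hw₂')
    simpa only [ContinuousLinearMap.sub_apply, ContinuousLinearMap.smul_apply, ContinuousLinearMap.mul_apply, ← hRw2, ← hRz2] using this
  have hrA : ∀ x : H, Raw x - Ra x = (w₁ - z₁) • Raw (Ra x) := by
    intro x
    have := congrArg (fun S : H →L[ℂ] H => S x) (aux_res T z₁ w₁ hz₁ hAw1)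
    simpa only [ContinuousLinearMap.sub_apply, ContinuousLinearMap.smul_apply, ContinuousLinearMap.mul_apply, ← hRaw, ← hRa] using this
  -- scalar equation for α
  have hαeq : ((starRingEnd ℂ) w₂ - (starRingEnd ℂ) z₂) * α * (E z₁ w₂)
      = (1 - E z₁ w₂) - (1 - E z₁ z₂) := by
    have e1 : α = (inner ℂ ξ (Ra (Rw2 (Rz2 ξ))) : ℂ) + α * (1 - E z₁ w₂) := by
      rw [hα]
      nth_rewrite 1 [hv]
      rw [inner_add_right, inner_smul_right, hβ w₂]
    have e2 : ((starRingEnd ℂ) w₂ - (starRingEnd ℂ) z₂) *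
        (inner ℂ ξ (Ra (Rw2 (Rz2 ξ))) : ℂ) = (1 - E z₁ w₂) - (1 - E z₁ z₂) := by
      rw [← inner_smul_right, ← map_smul, ← hrB, map_sub, inner_sub_right, hβ w₂, hβ z₂]
    linear_combination ((starRingEnd ℂ) w₂ - (starRingEnd ℂ) z₂) * e1 + e2
  -- the P and Q inner products
  have hinnerw1 : ∀ y : H, (inner ℂ (Rw1 ξ) y : ℂ) = inner ℂ ξ (Raw y) := by
    intro y
    rw [hRw1, hRaw]
    exact aux_innerA T w₁ ξ y
  have hPQ : ∀ t : ℂ, (w₁ - z₁) *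
      (inner ℂ (Rw1 ξ) (Ra (Ring.inverse (adjoint T - (starRingEnd ℂ t) • (1 : H →L[ℂ] H)) ξ)) : ℂ)
      = (1 - E w₁ t) - (1 - E z₁ t) := by
    intro t
    rw [hinnerw1, ← inner_smul_right, ← hrA, inner_sub_right]
    rw [hβw t, hβ t]
  have hP := hPQ w₂
  have hQ := hPQ z₂
  rw [← hRw2] at hP
  rw [← hRz2] at hQ
  -- expression for the target
  have hM : ((starRingEnd ℂ) w₂ - (starRingEnd ℂ) z₂) *
      (inner ℂ (Rw1 ξ) (Ra (Rw2 (Rz2 ξ))) : ℂ)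
      = inner ℂ (Rw1 ξ) (Ra (Rw2 ξ)) - inner ℂ (Rw1 ξ) (Ra (Rz2 ξ)) := by
    rw [← inner_smul_right, ← map_smul, ← hrB, map_sub, inner_sub_right]
  have hL : (inner ℂ (Rw1 ξ) (Rw2 (Ra (Rz2 ξ))) : ℂ)
      = inner ℂ (Rw1 ξ) (Ra (Rw2 (Rz2 ξ))) + α * inner ℂ (Rw1 ξ) (Ra (Rw2 ξ)) := by
    nth_rewrite 1 [hv]
    rw [inner_add_right, inner_smul_right]
  -- final algebra
  rw [eq_div_iff (mul_ne_zero (mul_ne_zero hane hbne) hEne)]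
  set L : ℂ := (inner ℂ (Rw1 ξ) (Rw2 (Ra (Rz2 ξ))) : ℂ)
  set M : ℂ := (inner ℂ (Rw1 ξ) (Ra (Rw2 (Rz2 ξ))) : ℂ)
  set P : ℂ := (inner ℂ (Rw1 ξ) (Ra (Rw2 ξ)) : ℂ)
  set Q : ℂ := (inner ℂ (Rw1 ξ) (Ra (Rz2 ξ)) : ℂ)
  linear_combination ((w₁ - z₁) * ((starRingEnd ℂ) w₂ - (starRingEnd ℂ) z₂) * E z₁ w₂) * hL
    + ((w₁ - z₁) * E z₁ w₂) * hM + (E z₁ z₂) * hP - (E z₁ w₂) * hQ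
    + ((w₁ - z₁) * P) * hαeq
end
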